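/- Assume the PACA setting with the Slater condition, and suppose the PACA sequence (xᵏ) is infinite (xᵏ ∉ C for all k). Then (xᵏ) converges R-linearly to some point x* ∈ C: there exists x* with fᵢ(x*) ≤ 0 for all i such that xᵏ → x* and limsup_{k→∞} ‖xᵏ − x*‖^{1/k} < 1. -/

import Mathlib

open Filter
open scoped RealInnerProductSpace

set_option maxHeartbeats 4000000 in
theorem stmt_17 {n m : ℕ} (hm : 0 < m)
    (f : Fin m → EuclideanSpace ℝ (Fin n) → ℝ)
    (hconv : ∀ i, ConvexOn ℝ Set.univ (f i))
    (xhat : EuclideanSpace ℝ (Fin n)) (hslater : ∀ i, f i xhat < 0)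
    (ε : ℕ → ℝ) (hεpos : ∀ k, 0 < ε k) (hεanti : StrictAnti ε)
    (hεlim : Tendsto ε atTop (nhds 0))
    (x : ℕ → EuclideanSpace ℝ (Fin n))
    (u v : Fin m → ℕ → EuclideanSpace ℝ (Fin n))
    (w : ℕ → EuclideanSpace ℝ (Fin n))
    (hsub : ∀ i k, ∀ z, f i (x k) + ⟪u i k, z - x k⟫ ≤ f i z)
    (hune : ∀ i k, 0 < f i (x k) + ε k → u i k ≠ 0)
    (hv : ∀ i k, v i k = (max 0 (f i (x k) + ε k) / ‖u i k‖ ^ 2) • u i k)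
    (hw : ∀ k, w k = (m : ℝ)⁻¹ • ∑ i, v i k)
    (hstep0 : ∀ k, w k = 0 → x (k + 1) = x k)
    (hstep : ∀ k, w k ≠ 0 →
      x (k + 1) = x k - (((m : ℝ)⁻¹ * ∑ i, ‖v i k‖ ^ 2) / ‖w k‖ ^ 2) • w k)
    (hinfinite : ∀ k, ∃ i, 0 < f i (x k)) :
    ∃ xstar : EuclideanSpace ℝ (Fin n),
      (∀ i, f i xstar ≤ 0) ∧ Tendsto x atTop (nhds xstar) ∧
        limsup (fun k => ‖x k - xstar‖ ^ (1 / (k : ℝ))) atTop < 1 := by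
  have hmR : (0:ℝ) < m := by exact_mod_cast hm
  haveI : Nonempty (Fin m) := ⟨⟨0, hm⟩⟩
  have hune' : Nonempty (Finset.univ : Finset (Fin m)).Nonempty → True := fun _ => trivial
  have huniv : (Finset.univ : Finset (Fin m)).Nonempty := Finset.univ_nonempty
  -- continuity of the f i
  have hcont : ∀ i, Continuous (f i) := by
    intro i
    rw [← continuousOn_univ]
    exact (hconv i).continuousOn isOpen_univ
  -- Slater margin δ
  set δ : ℝ := Finset.univ.inf' huniv (fun i => -(f i xhat)) with hδdef
  have hδpos : 0 < δ := by
    rw [hδdef, Finset.lt_inf'_iff]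
    intro i _
    linarith [hslater i]
  have hδle : ∀ i, f i xhat ≤ -δ := by
    intro i
    have := Finset.inf'_le (f := fun i => -(f i xhat)) (Finset.mem_univ i)
    linarith
  -- index K where ε drops below δ
  obtain ⟨K, hKδ⟩ : ∃ K, ε K < δ := (hεlim.eventually_lt_const hδpos).exists
  have hεδ : ∀ k, K ≤ k → ε k < δ := fun k hk => lt_of_le_of_lt (hεanti.antitone hk) hKδ
  -- the target sets
  set S : ℕ → Set (EuclideanSpace ℝ (Fin n)) := fun k => {z | ∀ i, f i z + ε k ≤ 0} with hSdef
  have hSclosed : ∀ k, IsClosed (S k) := by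
    intro k
    have : S k = ⋂ i, (fun z => f i z + ε k) ⁻¹' Set.Iic 0 := by
      ext z; simp [hSdef, Set.mem_iInter]
    rw [this]
    exact isClosed_iInter fun i => IsClosed.preimage ((hcont i).add continuous_const) isClosed_Iic
  have hxhatS : ∀ k, K ≤ k → xhat ∈ S k := by
    intro k hk i
    have := hδle i
    have := hεδ k hk
    linarith
  have hSne : ∀ k, K ≤ k → (S k).Nonempty := fun k hk => ⟨xhat, hxhatS k hk⟩
  have hSmono : ∀ k l, k ≤ l → S k ⊆ S l := by
    intro k l hkl z hz i
    have : ε l ≤ ε k := hεanti.antitone hkl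
    have := hz i
    linarith
  -- key inner product inequality
  have hkey : ∀ k, ∀ z ∈ S k, ∀ i, ‖v i k‖ ^ 2 ≤ ⟪v i k, x k - z⟫ := by
    intro k z hz i
    rcases le_or_gt (f i (x k) + ε k) 0 with h | h
    · have hc : max 0 (f i (x k) + ε k) = 0 := max_eq_left h
      rw [hv i k, hc]
      simp
    · have hu0 : u i k ≠ 0 := hune i k h
      have hun : 0 < ‖u i k‖ := norm_pos_iff.mpr hu0
      have hc : max 0 (f i (x k) + ε k) = f i (x k) + ε k := max_eq_right h.le
      have hzi : f i z + ε k ≤ 0 := hz i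
      have hinner : f i (x k) + ε k ≤ ⟪u i k, x k - z⟫ := by
        have h1 := hsub i k z
        have h2 : ⟪u i k, x k - z⟫ = -⟪u i k, z - x k⟫ := by
          rw [← inner_neg_right]
          congr 1
          abel
        rw [h2]
        linarith
      set a := f i (x k) + ε k with hadef
      set N := ‖u i k‖ with hNdef
      have hdiv0 : 0 ≤ a / N ^ 2 := by positivity
      rw [hv i k, hc, norm_smul, Real.norm_eq_abs, abs_of_nonneg hdiv0,
        real_inner_smul_left]
      have e1 : (a / N ^ 2 * N) ^ 2 = a / N ^ 2 * a := by
        field_simp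
      rw [e1]
      exact mul_le_mul_of_nonneg_left hinner hdiv0
  -- derived: inequality for w
  have hwkey : ∀ k, ∀ z ∈ S k, (m:ℝ)⁻¹ * ∑ i, ‖v i k‖ ^ 2 ≤ ⟪w k, x k - z⟫ := by
    intro k z hz
    rw [hw k, real_inner_smul_left, sum_inner]
    exact mul_le_mul_of_nonneg_left
      (Finset.sum_le_sum fun i _ => hkey k z hz i) (by positivity)
  -- Fejér-type inequality
  have hfejer : ∀ k, ∀ z ∈ S k,
      ‖x (k+1) - z‖ ^ 2 + ‖x (k+1) - x k‖ ^ 2 ≤ ‖x k - z‖ ^ 2 := by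
    intro k z hz
    by_cases hw0 : w k = 0
    · rw [hstep0 k hw0]
      simp
    · have hxk := hstep k hw0
      have hs0 : (0:ℝ) ≤ (m:ℝ)⁻¹ * ∑ i, ‖v i k‖ ^ 2 := by positivity
      have hsle := hwkey k z hz
      have hwn : 0 < ‖w k‖ := norm_pos_iff.mpr hw0
      have hwn2 : (0:ℝ) < ‖w k‖ ^ 2 := pow_pos hwn 2
      have hwne2 : ‖w k‖ ≠ 0 := ne_of_gt hwn
      have hα0 : 0 ≤ ((m:ℝ)⁻¹ * ∑ i, ‖v i k‖ ^ 2) / ‖w k‖ ^ 2 := div_nonneg hs0 (sq_nonneg _)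
      set s : ℝ := (m:ℝ)⁻¹ * ∑ i, ‖v i k‖ ^ 2 with hsdef
      set α : ℝ := s / ‖w k‖ ^ 2 with hαdef
      have hαs : α * ‖w k‖ ^ 2 = s := by
        rw [hαdef]
        field_simp
      have e1 : x (k+1) - z = (x k - z) - α • w k := by
        rw [hxk, sub_right_comm]
      have e2 : x (k+1) - x k = -(α • w k) := by
        rw [hxk, sub_sub_cancel_left]
      have e3 : ‖(x k - z) - α • w k‖ ^ 2
          = ‖x k - z‖ ^ 2 - 2 * (α * ⟪w k, x k - z⟫) + α ^ 2 * ‖w k‖ ^ 2 := by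
        rw [norm_sub_sq_real, real_inner_smul_right, norm_smul, Real.norm_eq_abs,
          abs_of_nonneg hα0, real_inner_comm]
        ring
      rw [e1, e2, e3, norm_neg, norm_smul, Real.norm_eq_abs, abs_of_nonneg hα0]
      nlinarith [mul_le_mul_of_nonneg_left hsle hα0]
  -- boundedness
  have hxb : ∀ k, K ≤ k → ‖x k - xhat‖ ≤ ‖x K - xhat‖ := by
    intro k hk
    induction k, hk using Nat.le_induction with
    | base => exact le_rfl
    | succ k hk ih =>
      have h := hfejer k xhat (hxhatS k hk)
      have h1 : ‖x (k+1) - xhat‖ ^ 2 ≤ ‖x k - xhat‖ ^ 2 := by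
        nlinarith [sq_nonneg ‖x (k+1) - x k‖]
      exact ((pow_le_pow_iff_left₀ (norm_nonneg _) (norm_nonneg _) two_ne_zero).mp h1).trans ih
  set ρ : ℝ := ‖x K - xhat‖ + 1 with hρdef
  -- bound on f over the ball
  have hρ0' : (0:ℝ) < ρ := by rw [hρdef]; positivity
  obtain ⟨M, hM0, hM⟩ : ∃ M, 0 ≤ M ∧ ∀ y ∈ Metric.closedBall xhat ρ, ∀ i, |f i y| ≤ M := by
    have hcF : ContinuousOn (fun y => ∑ i, |f i y|) (Metric.closedBall xhat ρ) :=
      (continuous_finset_sum _ fun i _ => (hcont i).abs).continuousOn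
    obtain ⟨C, hC⟩ := (isCompact_closedBall xhat ρ).exists_bound_of_continuousOn hcF
    have hkey2 : ∀ y ∈ Metric.closedBall xhat ρ, ∀ i, |f i y| ≤ C := by
      intro y hy i
      have h1 := hC y hy
      rw [Real.norm_eq_abs] at h1
      have h2 : |f i y| ≤ ∑ j, |f j y| :=
        Finset.single_le_sum (f := fun j => |f j y|) (fun j _ => abs_nonneg _)
          (Finset.mem_univ i)
      have h3 : ∑ j, |f j y| ≤ C := le_trans (le_abs_self _) h1
      linarith
    refine ⟨C, ?_, hkey2⟩
    have := hkey2 xhat (Metric.mem_closedBall_self hρ0'.le) ⟨0, hm⟩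
    exact le_trans (abs_nonneg _) this
  set L : ℝ := 2 * M + 1 with hLdef
  have hL1 : (1:ℝ) ≤ L := by simp [hLdef]; linarith
  have hL0 : (0:ℝ) < L := by linarith
  -- subgradient bound
  have hub : ∀ i k, K ≤ k → u i k ≠ 0 → ‖u i k‖ ≤ L := by
    intro i k hk hu0
    have hun : 0 < ‖u i k‖ := norm_pos_iff.mpr hu0
    have hxkball : x k ∈ Metric.closedBall xhat ρ := by
      rw [Metric.mem_closedBall, dist_eq_norm]
      have := hxb k hk
      rw [hρdef]
      linarith
    have hnorm1 : ‖(‖u i k‖⁻¹ • u i k)‖ = 1 := by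
      rw [norm_smul, Real.norm_eq_abs, abs_of_nonneg (by positivity)]
      field_simp
    have hzball : x k + ‖u i k‖⁻¹ • u i k ∈ Metric.closedBall xhat ρ := by
      rw [Metric.mem_closedBall, dist_eq_norm]
      have e : x k + ‖u i k‖⁻¹ • u i k - xhat = (x k - xhat) + ‖u i k‖⁻¹ • u i k := by
        rw [add_sub_right_comm]
      rw [e]
      have h1 := norm_add_le (x k - xhat) (‖u i k‖⁻¹ • u i k)
      rw [hnorm1] at h1
      have := hxb k hk
      rw [hρdef]
      linarith
    have hip : ⟪u i k, (x k + ‖u i k‖⁻¹ • u i k) - x k⟫ = ‖u i k‖ := by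
      rw [add_sub_cancel_left, real_inner_smul_right, real_inner_self_eq_norm_sq]
      field_simp
    have h1 := hsub i k (x k + ‖u i k‖⁻¹ • u i k)
    rw [hip] at h1
    have h2 := hM _ hzball i
    have h3 := hM (x k) hxkball i
    rw [hLdef]
    have h4 := abs_le.mp h2
    have h5 := abs_le.mp h3
    linarith [h4.1, h4.2, h5.1, h5.2]
  -- max function
  set g : ℕ → ℝ := fun k => Finset.univ.sup' huniv (fun i => f i (x k)) with hgdef
  have hgpos : ∀ k, 0 < g k := by
    intro k
    obtain ⟨i, hi⟩ := hinfinite k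
    simp only [hgdef]
    exact lt_of_lt_of_le hi (Finset.le_sup' (f := fun i => f i (x k)) (Finset.mem_univ i))
  have hfg : ∀ i k, f i (x k) ≤ g k := by
    intro i k
    simp only [hgdef]
    exact Finset.le_sup' (f := fun i => f i (x k)) (Finset.mem_univ i)
  -- lower bound on Σ ‖v‖²
  have hSig : ∀ k, K ≤ k → (g k + ε k) ^ 2 / L ^ 2 ≤ ∑ i, ‖v i k‖ ^ 2 := by
    intro k hk
    obtain ⟨i, -, hieq⟩ := Finset.exists_mem_eq_sup' huniv (fun i => f i (x k))
    have hgi : g k = f i (x k) := by rw [hgdef]; exact hieq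
    have ha : 0 < f i (x k) + ε k := by
      have h1 := hgpos k
      have h2 := hεpos k
      rw [hgi] at h1
      linarith
    have hu0 : u i k ≠ 0 := hune i k ha
    have hun : 0 < ‖u i k‖ := norm_pos_iff.mpr hu0
    have huL : ‖u i k‖ ≤ L := hub i k hk hu0
    have hvnorm : ‖v i k‖ ^ 2 = (f i (x k) + ε k) ^ 2 / ‖u i k‖ ^ 2 := by
      rw [hv i k, max_eq_right ha.le, norm_smul, Real.norm_eq_abs,
        abs_of_nonneg (by positivity : (0:ℝ) ≤ (f i (x k) + ε k) / ‖u i k‖ ^ 2)]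
      field_simp
    have h1 : (g k + ε k) ^ 2 / L ^ 2 ≤ ‖v i k‖ ^ 2 := by
      rw [hvnorm, hgi]
      exact div_le_div_of_nonneg_left (sq_nonneg _) (pow_pos hun 2) (by nlinarith)
    exact le_trans h1 (Finset.single_le_sum (fun j _ => sq_nonneg ‖v j k‖) (Finset.mem_univ i))
  -- w nonzero
  have hgε : ∀ k, 0 < g k + ε k := fun k => by
    have := hgpos k
    have := hεpos k
    linarith
  have hwne : ∀ k, K ≤ k → w k ≠ 0 := by
    intro k hk hw0
    have h1 := hwkey k xhat (hxhatS k hk)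
    rw [hw0, inner_zero_left] at h1
    have h3 : 0 < (g k + ε k) ^ 2 / L ^ 2 := by
      have := hgε k
      positivity
    have h4 : 0 < (m:ℝ)⁻¹ * ∑ i, ‖v i k‖ ^ 2 :=
      mul_pos (inv_pos.mpr hmR) (lt_of_lt_of_le h3 (hSig k hk))
    exact absurd h1 (not_le.mpr h4)
  -- step length lower bound
  have hstep2 : ∀ k, K ≤ k → (m:ℝ)⁻¹ * ∑ i, ‖v i k‖ ^ 2 ≤ ‖x (k+1) - x k‖ ^ 2 := by
    intro k hk
    have hw0 := hwne k hk
    have hwn : 0 < ‖w k‖ := norm_pos_iff.mpr hw0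
    have hwn2 : (0:ℝ) < ‖w k‖ ^ 2 := pow_pos hwn 2
    have hs0 : (0:ℝ) ≤ (m:ℝ)⁻¹ * ∑ i, ‖v i k‖ ^ 2 :=
      mul_nonneg (inv_nonneg.mpr (Nat.cast_nonneg m)) (Finset.sum_nonneg fun i _ => sq_nonneg _)
    have hwle : ‖w k‖ ^ 2 ≤ (m:ℝ)⁻¹ * ∑ i, ‖v i k‖ ^ 2 := by
      rw [hw k, norm_smul, Real.norm_eq_abs, abs_of_nonneg (by positivity : (0:ℝ) ≤ (m:ℝ)⁻¹),
        mul_pow]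
      have h1 : ‖∑ i, v i k‖ ≤ ∑ i, ‖v i k‖ := norm_sum_le _ _
      have h2 : (∑ i, ‖v i k‖) ^ 2 ≤ (m:ℝ) * ∑ i, ‖v i k‖ ^ 2 := by
        have h := sq_sum_le_card_mul_sum_sq (s := (Finset.univ : Finset (Fin m)))
          (f := fun i => ‖v i k‖)
        simpa using h
      have h3 : ‖∑ i, v i k‖ ^ 2 ≤ (m:ℝ) * ∑ i, ‖v i k‖ ^ 2 :=
        le_trans (pow_le_pow_left₀ (norm_nonneg _) h1 2) h2
      calc ((m:ℝ)⁻¹) ^ 2 * ‖∑ i, v i k‖ ^ 2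
          ≤ ((m:ℝ)⁻¹) ^ 2 * ((m:ℝ) * ∑ i, ‖v i k‖ ^ 2) :=
            mul_le_mul_of_nonneg_left h3 (by positivity)
        _ = (m:ℝ)⁻¹ * ∑ i, ‖v i k‖ ^ 2 := by
            field_simp
    rw [hstep k hw0, sub_sub_cancel_left, norm_neg, norm_smul, Real.norm_eq_abs,
      abs_of_nonneg (div_nonneg hs0 (sq_nonneg _))]
    have e : ((((m:ℝ)⁻¹ * ∑ i, ‖v i k‖ ^ 2) / ‖w k‖ ^ 2) * ‖w k‖) ^ 2
        = ((m:ℝ)⁻¹ * ∑ i, ‖v i k‖ ^ 2) ^ 2 / ‖w k‖ ^ 2 := by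
      field_simp
    rw [e, le_div_iff₀ hwn2]
    nlinarith
  -- distances
  set D : ℕ → ℝ := fun k => Metric.infDist (x k) (S k) with hDdef
  have hDnn : ∀ k, 0 ≤ D k := fun k => Metric.infDist_nonneg
  have hDpos : ∀ k, K ≤ k → 0 < D k := by
    intro k hk
    have hxnot : x k ∉ S k := by
      obtain ⟨i, hi⟩ := hinfinite k
      intro hmem
      have h1 := hmem i
      have h2 := hεpos k
      linarith
    exact ((hSclosed k).notMem_iff_infDist_pos (hSne k hk)).mp hxnot
  -- error bound
  have hDub : ∀ k, K ≤ k → D k ≤ ρ * (g k + ε k) / δ := by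
    intro k hk
    have hg := hgpos k
    have hε := hεpos k
    have hεd := hεδ k hk
    have hδg : 0 < δ + g k := by linarith
    set t : ℝ := (δ - ε k) / (δ + g k) with htdef
    have ht0 : 0 ≤ t := div_nonneg (by linarith) hδg.le
    have ht1 : t ≤ 1 := by
      rw [htdef, div_le_one hδg]
      linarith
    have hyS : t • (x k) + (1 - t) • xhat ∈ S k := by
      intro i
      have hcv := (hconv i).2 (Set.mem_univ (x k)) (Set.mem_univ xhat) ht0
        (by linarith : (0:ℝ) ≤ 1 - t) (by ring)
      simp only [smul_eq_mul] at hcv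
      have h1 : f i (x k) ≤ g k := hfg i k
      have h2 : f i xhat ≤ -δ := hδle i
      have ht : t * (δ + g k) = δ - ε k := div_mul_cancel₀ _ (ne_of_gt hδg)
      have e3 : t * f i (x k) ≤ t * g k := mul_le_mul_of_nonneg_left h1 ht0
      have e4 : (1 - t) * f i xhat ≤ (1 - t) * (-δ) :=
        mul_le_mul_of_nonneg_left h2 (by linarith)
      show f i (t • (x k) + (1 - t) • xhat) + ε k ≤ 0
      nlinarith
    have h5 : D k ≤ dist (x k) (t • (x k) + (1 - t) • xhat) :=
      Metric.infDist_le_dist_of_mem hyS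
    have e6 : x k - (t • (x k) + (1 - t) • xhat) = (1 - t) • (x k - xhat) := by
      module
    have h7 : dist (x k) (t • (x k) + (1 - t) • xhat) = (1 - t) * ‖x k - xhat‖ := by
      rw [dist_eq_norm, e6, norm_smul, Real.norm_eq_abs, abs_of_nonneg (by linarith)]
    have h8 : (1 - t) = (g k + ε k) / (δ + g k) := by
      rw [htdef]
      field_simp
      ring
    have h9 : (g k + ε k) / (δ + g k) ≤ (g k + ε k) / δ :=
      div_le_div_of_nonneg_left (by linarith) hδpos (by linarith)
    have h10 : ‖x k - xhat‖ ≤ ρ := by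
      have := hxb k hk
      rw [hρdef]
      linarith
    calc D k ≤ (1 - t) * ‖x k - xhat‖ := h7 ▸ h5
      _ ≤ ((g k + ε k) / δ) * ρ := by
          refine mul_le_mul (h8 ▸ h9) h10 (norm_nonneg _) ?_
          have := hgε k
          positivity
      _ = ρ * (g k + ε k) / δ := by ring
  -- decrease of D
  have hDdec : ∀ k, K ≤ k → (D (k+1)) ^ 2 + ‖x (k+1) - x k‖ ^ 2 ≤ (D k) ^ 2 := by
    intro k hk
    obtain ⟨z, hzS, hzd⟩ := (hSclosed k).exists_infDist_eq_dist (hSne k hk) (x k)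
    have h1 := hfejer k z hzS
    have h2 : D (k+1) ≤ dist (x (k+1)) z := by
      have h3 : Metric.infDist (x (k+1)) (S (k+1)) ≤ Metric.infDist (x (k+1)) (S k) :=
        Metric.infDist_le_infDist_of_subset (hSmono k (k+1) (Nat.le_succ k)) (hSne k hk)
      exact h3.trans (Metric.infDist_le_dist_of_mem hzS)
    have h4 : D k = ‖x k - z‖ := by
      rw [hDdef]
      simp only []
      rw [hzd, dist_eq_norm]
    have h5 : (D (k+1)) ^ 2 ≤ ‖x (k+1) - z‖ ^ 2 := by
      rw [← dist_eq_norm]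
      exact pow_le_pow_left₀ (hDnn _) h2 2
    rw [h4]
    linarith
  -- geometric constants
  set c : ℝ := δ ^ 2 / (ρ ^ 2 * m * L ^ 2) with hcdef
  have hρ0 : (0:ℝ) < ρ := by
    rw [hρdef]; positivity
  have hc0 : 0 < c := by rw [hcdef]; positivity
  have hstepD : ∀ k, K ≤ k → c * (D k) ^ 2 ≤ ‖x (k+1) - x k‖ ^ 2 := by
    intro k hk
    have h1 := hstep2 k hk
    have h2 := hSig k hk
    have h3 := hDub k hk
    have h4 : D k ^ 2 ≤ (ρ * (g k + ε k) / δ) ^ 2 := pow_le_pow_left₀ (hDnn k) h3 2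
    have h5 : c * (ρ * (g k + ε k) / δ) ^ 2 = (m:ℝ)⁻¹ * ((g k + ε k) ^ 2 / L ^ 2) := by
      rw [hcdef]
      field_simp
    calc c * D k ^ 2 ≤ c * (ρ * (g k + ε k) / δ) ^ 2 :=
          mul_le_mul_of_nonneg_left h4 hc0.le
      _ = (m:ℝ)⁻¹ * ((g k + ε k) ^ 2 / L ^ 2) := h5
      _ ≤ (m:ℝ)⁻¹ * ∑ i, ‖v i k‖ ^ 2 :=
          mul_le_mul_of_nonneg_left h2 (inv_nonneg.mpr (Nat.cast_nonneg m))
      _ ≤ _ := h1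
  have hDq : ∀ k, K ≤ k → (D (k+1)) ^ 2 ≤ (1 - c) * (D k) ^ 2 := by
    intro k hk
    have h1 := hDdec k hk
    have h2 := hstepD k hk
    nlinarith
  have hc1 : c < 1 := by
    have h1 := hDq K le_rfl
    have h2 := hDpos K le_rfl
    have h3 := hDpos (K+1) (by omega)
    nlinarith
  set q : ℝ := Real.sqrt (1 - c) with hqdef
  have hq0 : 0 < q := Real.sqrt_pos.mpr (by linarith)
  have hq1 : q < 1 := by
    rw [hqdef]
    have : (1:ℝ) - c < 1 := by linarith
    calc Real.sqrt (1 - c) < Real.sqrt 1 := by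
          exact (Real.sqrt_lt_sqrt (by linarith) this)
      _ = 1 := Real.sqrt_one
  have hq2 : q ^ 2 = 1 - c := Real.sq_sqrt (by linarith)
  -- geometric decay of D
  have hDgeo : ∀ j, D (K + j) ≤ D K * q ^ j := by
    intro j
    induction j with
    | zero => simp
    | succ j ih =>
      have hk : K ≤ K + j := Nat.le_add_right _ _
      have h1 := hDq (K + j) hk
      have h3 : D (K + j) ^ 2 ≤ (D K * q ^ j) ^ 2 := pow_le_pow_left₀ (hDnn _) ih 2
      have h2 : D (K + j + 1) ^ 2 ≤ (D K * q ^ (j + 1)) ^ 2 := by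
        have e : (D K * q ^ (j + 1)) ^ 2 = (1 - c) * (D K * q ^ j) ^ 2 := by
          rw [← hq2]
          ring
        rw [e]
        nlinarith
      have hrhs : 0 ≤ D K * q ^ (j + 1) := mul_nonneg (hDnn K) (pow_nonneg hq0.le _)
      exact (pow_le_pow_iff_left₀ (hDnn _) hrhs two_ne_zero).mp h2
  -- step bound
  have hstepgeo : ∀ j, dist (x (K + j)) (x (K + j + 1)) ≤ D K * q ^ j := by
    intro j
    have hk : K ≤ K + j := Nat.le_add_right _ _
    have h1 := hDdec (K + j) hk
    have h2 : ‖x (K + j + 1) - x (K + j)‖ ^ 2 ≤ (D (K + j)) ^ 2 := by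
      nlinarith [sq_nonneg (D (K + j + 1))]
    have h3 : ‖x (K + j + 1) - x (K + j)‖ ≤ D (K + j) :=
      (pow_le_pow_iff_left₀ (norm_nonneg _) (hDnn _) two_ne_zero).mp h2
    rw [dist_comm, dist_eq_norm]
    exact h3.trans (hDgeo j)
  -- convergence
  have hcauchy : CauchySeq (fun j => x (K + j)) :=
    cauchySeq_of_le_geometric q (D K) hq1 hstepgeo
  obtain ⟨xstar, hy⟩ := cauchySeq_tendsto_of_complete hcauchy
  have hxtend : Tendsto x atTop (nhds xstar) := by
    rw [← tendsto_add_atTop_iff_nat K]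
    simpa [add_comm] using hy
  have hdist : ∀ j, dist (x (K + j)) xstar ≤ D K * q ^ j / (1 - q) :=
    fun j => dist_le_of_le_geometric_of_tendsto q (D K) hq1 hstepgeo hy j
  have hDK : 0 < D K := hDpos K le_rfl
  refine ⟨xstar, ?_, hxtend, ?_⟩
  · -- xstar ∈ C
    intro i
    have hc2pos : 0 < Real.sqrt m * L := mul_pos (Real.sqrt_pos.mpr hmR) hL0
    have hb : ∀ j, f i (x (K + j)) ≤ (Real.sqrt m * L) * (D K * q ^ j) := by
      intro j
      have hk : K ≤ K + j := Nat.le_add_right _ _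
      have h1 := hSig (K + j) hk
      have h2 := hstep2 (K + j) hk
      have h3 : ‖x (K + j + 1) - x (K + j)‖ ≤ D K * q ^ j := by
        have h := hstepgeo j
        rwa [dist_comm, dist_eq_norm] at h
      have h4 : (g (K + j) + ε (K + j)) ^ 2 ≤ ((Real.sqrt m * L) * (D K * q ^ j)) ^ 2 := by
        have e : ((Real.sqrt m * L) * (D K * q ^ j)) ^ 2
            = (m:ℝ) * L ^ 2 * (D K * q ^ j) ^ 2 := by
          rw [mul_pow, mul_pow, Real.sq_sqrt hmR.le]
        rw [e]
        have h5 : ‖x (K + j + 1) - x (K + j)‖ ^ 2 ≤ (D K * q ^ j) ^ 2 :=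
          pow_le_pow_left₀ (norm_nonneg _) h3 2
        have hL2 : (0:ℝ) < L ^ 2 := pow_pos hL0 2
        have h6 : (g (K + j) + ε (K + j)) ^ 2 ≤ L ^ 2 * ∑ l, ‖v l (K + j)‖ ^ 2 := by
          rw [div_le_iff₀ hL2] at h1
          linarith
        have h7 : (m:ℝ)⁻¹ * ∑ l, ‖v l (K + j)‖ ^ 2 ≤ (D K * q ^ j) ^ 2 := le_trans h2 h5
        have h8 : ∑ l, ‖v l (K + j)‖ ^ 2 ≤ (m:ℝ) * (D K * q ^ j) ^ 2 := by
          rw [inv_mul_le_iff₀ hmR] at h7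
          linarith
        calc (g (K + j) + ε (K + j)) ^ 2 ≤ L ^ 2 * ∑ l, ‖v l (K + j)‖ ^ 2 := h6
          _ ≤ L ^ 2 * ((m:ℝ) * (D K * q ^ j) ^ 2) := mul_le_mul_of_nonneg_left h8 hL2.le
          _ = (m:ℝ) * L ^ 2 * (D K * q ^ j) ^ 2 := by ring
      have hpos : 0 ≤ (Real.sqrt m * L) * (D K * q ^ j) :=
        mul_nonneg hc2pos.le (mul_nonneg (hDnn K) (pow_nonneg hq0.le _))
      have h9 : g (K + j) + ε (K + j) ≤ (Real.sqrt m * L) * (D K * q ^ j) :=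
        (pow_le_pow_iff_left₀ (hgε (K + j)).le hpos two_ne_zero).mp h4
      have h10 := hfg i (K + j)
      have h11 := hεpos (K + j)
      linarith
    have htend1 : Tendsto (fun j => f i (x (K + j))) atTop (nhds (f i xstar)) :=
      ((hcont i).tendsto xstar).comp hy
    have htend2 : Tendsto (fun j : ℕ => (Real.sqrt m * L) * (D K * q ^ j)) atTop (nhds 0) := by
      have h1 := tendsto_pow_atTop_nhds_zero_of_lt_one hq0.le hq1
      have h2 := h1.const_mul ((Real.sqrt m * L) * D K)
      rw [mul_zero] at h2
      refine h2.congr fun j => ?_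
      ring
    exact le_of_tendsto_of_tendsto' htend1 htend2 hb
  · -- limsup
    set B : ℝ := D K / ((1 - q) * q ^ K) with hB
    have hB0 : 0 < B := by
      rw [hB]
      have h1 : (0:ℝ) < 1 - q := by linarith
      have h2 : (0:ℝ) < q ^ K := pow_pos hq0 K
      positivity
    have hbound : ∀ k, K ≤ k → ‖x k - xstar‖ ≤ B * q ^ k := by
      intro k hk
      have e : K + (k - K) = k := by omega
      have h1 := hdist (k - K)
      rw [e] at h1
      rw [← dist_eq_norm]
      refine h1.trans (le_of_eq ?_)
      have e2 : (q:ℝ) ^ (k - K) = q ^ k * (q ^ K)⁻¹ := pow_sub₀ q (ne_of_gt hq0) hk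
      rw [hB, e2]
      have hq1' : (1:ℝ) - q ≠ 0 := by linarith
      have hqK : (q:ℝ) ^ K ≠ 0 := ne_of_gt (pow_pos hq0 K)
      field_simp
    set q' : ℝ := (1 + q) / 2 with hq'
    have hq'1 : q' < 1 := by
      rw [hq']
      linarith
    have hqq' : q < q' := by
      rw [hq']
      linarith
    have htendB : Tendsto (fun k : ℕ => B ^ (1 / (k:ℝ))) atTop (nhds 1) := by
      have h1 : Tendsto (fun k : ℕ => 1 / (k:ℝ)) atTop (nhds 0) :=
        tendsto_one_div_atTop_nhds_zero_nat
      have h2 : ContinuousAt (fun t : ℝ => B ^ t) 0 :=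
        Real.continuousAt_const_rpow (ne_of_gt hB0)
      have h3 := h2.tendsto.comp h1
      simpa [Real.rpow_zero, Function.comp_def] using h3
    have hev1 : ∀ᶠ k : ℕ in atTop, B ^ (1 / (k:ℝ)) < q' / q :=
      htendB.eventually_lt_const (by rw [lt_div_iff₀ hq0]; linarith)
    have hev2 : ∀ᶠ k : ℕ in atTop, max K 1 ≤ k := eventually_ge_atTop _
    have hev : ∀ᶠ k : ℕ in atTop, ‖x k - xstar‖ ^ (1 / (k:ℝ)) ≤ q' := by
      filter_upwards [hev1, hev2] with k h1 h2
      have hkK : K ≤ k := le_trans (le_max_left _ _) h2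
      have hk1 : 1 ≤ k := le_trans (le_max_right _ _) h2
      have hk0 : (k:ℝ) ≠ 0 := Nat.cast_ne_zero.mpr (by omega)
      have hrpow : ‖x k - xstar‖ ^ (1 / (k:ℝ)) ≤ (B * q ^ k) ^ (1 / (k:ℝ)) :=
        Real.rpow_le_rpow (norm_nonneg _) (hbound k hkK) (by positivity)
      have e3 : (B * q ^ k) ^ (1 / (k:ℝ)) = B ^ (1 / (k:ℝ)) * q := by
        rw [Real.mul_rpow hB0.le (pow_nonneg hq0.le _)]
        congr 1
        rw [← Real.rpow_natCast q k, ← Real.rpow_mul hq0.le, mul_one_div, div_self hk0,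
          Real.rpow_one]
      rw [e3] at hrpow
      have h4 : B ^ (1 / (k:ℝ)) * q ≤ q' := by
        have h5 := (lt_div_iff₀ hq0).mp h1
        linarith
      linarith
    have hcb : IsCoboundedUnder (· ≤ ·) atTop (fun k : ℕ => ‖x k - xstar‖ ^ (1 / (k:ℝ))) :=
      isCoboundedUnder_le_of_le atTop (fun k => Real.rpow_nonneg (norm_nonneg _) _)
    exact lt_of_le_of_lt (limsup_le_of_le hcb hev) hq'1
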